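/- Let k = 2^u be a power of two and suppose m+1 parties have positions P_0, …, P_m and there is a common value L with w·k ≤ L < (w+1)·k for some non-negative integer w, and each P_i satisfies L ≤ P_i and Σ_i (P_i − L) < k. Then for every party i, w·k belongs to {k·⌊P_i/k⌋, k·⌊P_i/k⌋ − k} and w·k ≤ L. -/

import Mathlib

/-- True meeting point lemma: if `k = 2^u`, `w·k ≤ L < (w+1)·k`, each party's position
satisfies `L ≤ P i`, and the total disagreement `Σ i (P i - L) < k`, then for every
party `i`, `w·k` is one of the two scale-`k` meeting points `k·⌊P i/k⌋` or
`k·⌊P i/k⌋ - k`, and `w·k ≤ L`. -/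
theorem true_meeting_point (m u w L : ℕ) (k : ℕ) (hk : k = 2 ^ u)
    (P : Fin (m + 1) → ℕ)
    (hL1 : w * k ≤ L) (hL2 : L < (w + 1) * k)
    (hP : ∀ i, L ≤ P i)
    (hD : (∑ i, (P i - L)) < k) :
    ∀ i, (w * k = k * (P i / k) ∨ w * k = k * (P i / k) - k) ∧ w * k ≤ L := by
  intro i
  have hkpos : 0 < k := hk ▸ Nat.two_pow_pos u
  have hterm : P i - L ≤ ∑ j, (P j - L) :=
    Finset.single_le_sum (f := fun j => P j - L) (fun j _ => Nat.zero_le _) (Finset.mem_univ i)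
  have hPL := hP i
  have hPi : P i < L + k := by omega
  have h1 : w ≤ P i / k := Nat.le_div_iff_mul_le hkpos |>.2 (by omega)
  have h2 : P i / k < w + 2 := by
    have := Nat.div_lt_iff_lt_mul hkpos |>.2 (show P i < (w + 2) * k by nlinarith)
    exact this
  rcases (show P i / k = w ∨ P i / k = w + 1 by omega) with h | h
  · exact ⟨Or.inl (by rw [h]; ring), hL1⟩
  · exact ⟨Or.inr (by rw [h, Nat.mul_add, Nat.mul_one, Nat.add_sub_cancel, Nat.mul_comm]), hL1⟩
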